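/- Let (S; R) be a positive presentation complete for right-reversing. For elements g, h of the monoid ⟨S | R⟩⁺, the following are equivalent: (i) g and h admit a common right-multiple; (ii) for some S-words u, v representing g, h, the right-reversing of u^{-1}v terminates with a positive–negative word; (iii) the same for all S-words u, v representing g, h. -/

import Mathlib

namespace Stmt3

variable {S : Type*}

/-- A positive word viewed as a signed word. -/
def pos (w : List S) : List (S × Bool) := w.map (fun s => (s, true))

/-- The inverse `w⁻¹` of a positive word, as a signed word. -/
def neg (w : List S) : List (S × Bool) := w.reverse.map (fun s => (s, false))

/-- One step of right-`R`-reversing. -/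
inductive RevStep (R : Set (List S × List S)) :
    List (S × Bool) → List (S × Bool) → Prop
  | rel (w₁ w₂ : List (S × Bool)) (s s' : S) (v' v : List S) :
      ((s :: v', s' :: v) ∈ R ∨ (s' :: v, s :: v') ∈ R) →
      RevStep R (w₁ ++ (s, false) :: (s', true) :: w₂) (w₁ ++ pos v' ++ neg v ++ w₂)
  | triv (w₁ w₂ : List (S × Bool)) (s : S) :
      RevStep R (w₁ ++ (s, false) :: (s, true) :: w₂) (w₁ ++ w₂)

/-- Right-`R`-reversing in finitely many steps. -/
def Rev (R : Set (List S × List S)) : List (S × Bool) → List (S × Bool) → Prop :=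
  Relation.ReflTransGen (RevStep R)

/-- The congruence `≡⁺_R` on positive words generated by the relations of `R`. -/
def posCon (R : Set (List S × List S)) : Con (FreeMonoid S) :=
  conGen (fun a b => (FreeMonoid.toList a, FreeMonoid.toList b) ∈ R)

/-- The monoid `⟨S | R⟩⁺` presented by the positive presentation `(S; R)`. -/
def PresMonoid (R : Set (List S × List S)) : Type _ := (posCon R).Quotient

instance (R : Set (List S × List S)) : Monoid (PresMonoid R) :=
  inferInstanceAs (Monoid (posCon R).Quotient)

/-- The element of `⟨S | R⟩⁺` represented by a positive word. -/
def cls (R : Set (List S × List S)) (u : List S) : PresMonoid R :=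
  ((FreeMonoid.ofList u : FreeMonoid S) : (posCon R).Quotient)

/-- `(S; R)` is complete for right-reversing: `u ≡⁺_R v` implies that `u⁻¹ v`
right-`R`-reverses to the empty word. -/
def Complete (R : Set (List S × List S)) : Prop :=
  ∀ u v : List S, posCon R (FreeMonoid.ofList u) (FreeMonoid.ofList v) →
    Rev R (neg u ++ pos v) []

/-! ### Auxiliary lemmas -/

lemma pos_nil : pos ([] : List S) = [] := rfl
lemma neg_nil : neg ([] : List S) = [] := rfl

lemma pos_cons (s : S) (w : List S) : pos (s :: w) = (s, true) :: pos w := rfl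

lemma neg_cons (s : S) (w : List S) : neg (s :: w) = neg w ++ [(s, false)] := by
  simp [neg]

lemma pos_append (u v : List S) : pos (u ++ v) = pos u ++ pos v := by
  simp [pos]

lemma neg_append (u v : List S) : neg (u ++ v) = neg v ++ neg u := by
  simp [neg]

lemma cls_append (R : Set (List S × List S)) (u v : List S) :
    cls R (u ++ v) = cls R u * cls R v := rfl

lemma cls_nil (R : Set (List S × List S)) : cls R [] = 1 := rfl

lemma exists_cls (R : Set (List S × List S)) (g : PresMonoid R) : ∃ u, cls R u = g := by
  obtain ⟨m, hm⟩ := Quot.exists_rep g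
  exact ⟨m.toList, by simp only [cls, FreeMonoid.ofList_toList]; exact hm⟩

lemma cls_rel {R : Set (List S × List S)} {a b : List S} (h : (a, b) ∈ R) :
    cls R a = cls R b := by
  refine (Con.eq _).mpr ?_
  exact ConGen.Rel.of _ _ (by simpa [FreeMonoid.toList_ofList] using h)

/-! ### Relational semantics of signed words -/

def Sem (R : Set (List S × List S)) : List (S × Bool) → PresMonoid R → PresMonoid R → Prop
  | [], x, y => x = y
  | (s, true) :: w, x, y => Sem R w (x * cls R [s]) y
  | (s, false) :: w, x, y => ∃ z, x = z * cls R [s] ∧ Sem R w z y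

lemma Sem_append (R : Set (List S × List S)) (w₁ w₂ : List (S × Bool))
    (x y : PresMonoid R) :
    Sem R (w₁ ++ w₂) x y ↔ ∃ z, Sem R w₁ x z ∧ Sem R w₂ z y := by
  induction w₁ generalizing x with
  | nil => simp [Sem]
  | cons c w₁ ih =>
    obtain ⟨s, b⟩ := c
    cases b <;> simp [Sem, ih] <;> tauto

lemma Sem_pos (R : Set (List S × List S)) (w : List S) (x y : PresMonoid R) :
    Sem R (pos w) x y ↔ y = x * cls R w := by
  induction w generalizing x with
  | nil => simp [Sem, pos, cls_nil, eq_comm]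
  | cons s w ih =>
    rw [pos_cons]
    show Sem R (pos w) (x * cls R [s]) y ↔ _
    rw [ih]
    have : cls R (s :: w) = cls R [s] * cls R w := cls_append R [s] w
    rw [this, mul_assoc]

lemma Sem_neg (R : Set (List S × List S)) (w : List S) (x y : PresMonoid R) :
    Sem R (neg w) x y ↔ x = y * cls R w := by
  induction w generalizing x y with
  | nil => simp [Sem, neg, cls_nil]
  | cons s w ih =>
    rw [neg_cons, Sem_append]
    have h1 : ∀ z : PresMonoid R, Sem R [(s, false)] z y ↔ z = y * cls R [s] := by
      intro z; simp [Sem]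
    constructor
    · rintro ⟨z, hz1, hz2⟩
      rw [h1] at hz2
      rw [ih] at hz1
      rw [hz1, hz2]
      rw [show cls R (s :: w) = cls R [s] * cls R w from cls_append R [s] w, mul_assoc]
    · intro hx
      refine ⟨y * cls R [s], ?_, (h1 _).mpr rfl⟩
      rw [ih, hx,
        show cls R (s :: w) = cls R [s] * cls R w from cls_append R [s] w, mul_assoc]

lemma Sem_of_revStep {R : Set (List S × List S)} {w w' : List (S × Bool)}
    (h : RevStep R w w') {x y : PresMonoid R} (hs : Sem R w x y) : Sem R w' x y := by
  cases h with
  | rel w₁ w₂ s s' v' v hR =>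
    have key : cls R (s :: v') = cls R (s' :: v) := by
      rcases hR with h | h
      · exact cls_rel h
      · exact (cls_rel h).symm
    rw [Sem_append] at hs
    obtain ⟨z, hz, hmid⟩ := hs
    obtain ⟨t, ht, hw⟩ : ∃ t, z = t * cls R [s] ∧ Sem R w₂ (t * cls R [s']) y := hmid
    rw [show ((w₁ ++ pos v') ++ neg v) ++ w₂ = w₁ ++ (pos v' ++ (neg v ++ w₂)) by
      simp [List.append_assoc]]
    rw [Sem_append]
    refine ⟨z, hz, ?_⟩
    rw [Sem_append]
    refine ⟨z * cls R v', (Sem_pos R v' z _).mpr rfl, ?_⟩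
    rw [Sem_append]
    refine ⟨t * cls R [s'], ?_, hw⟩
    rw [Sem_neg]
    rw [ht, mul_assoc, mul_assoc, ← cls_append, ← cls_append]
    exact congrArg (t * ·) key
  | triv w₁ w₂ s =>
    rw [Sem_append] at hs ⊢
    obtain ⟨z, hz, hmid⟩ := hs
    obtain ⟨t, ht, hw⟩ : ∃ t, z = t * cls R [s] ∧ Sem R w₂ (t * cls R [s]) y := hmid
    exact ⟨z, hz, by rwa [← ht] at hw⟩

lemma Sem_of_rev {R : Set (List S × List S)} {w w' : List (S × Bool)}
    (h : Rev R w w') {x y : PresMonoid R} (hs : Sem R w x y) : Sem R w' x y := by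
  induction h with
  | refl => exact hs
  | tail _ hstep ih => exact Sem_of_revStep hstep ih

lemma common_of_rev {R : Set (List S × List S)} {u v v' u' : List S}
    (h : Rev R (neg u ++ pos v) (pos v' ++ neg u')) :
    cls R u * cls R v' = cls R v * cls R u' := by
  have h1 : Sem R (neg u ++ pos v) (cls R u) (cls R v) := by
    rw [Sem_append]
    exact ⟨1, (Sem_neg R u _ _).mpr (one_mul _).symm, (Sem_pos R v _ _).mpr (one_mul _).symm⟩
  have h2 := Sem_of_rev h h1
  rw [Sem_append] at h2
  obtain ⟨z, hz1, hz2⟩ := h2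
  rw [Sem_pos] at hz1
  rw [Sem_neg] at hz2
  rw [← hz1, hz2]

/-! ### Extraction of a sub-reversing -/

inductive MStep (R : Set (List S × List S)) :
    List (S × Bool) → List (S × Bool) → Prop
  | rev {w w' : List (S × Bool)} : RevStep R w w' → MStep R w w'
  | dropHead (s : S) (w : List (S × Bool)) : MStep R ((s, true) :: w) w
  | dropLast (s : S) (w : List (S × Bool)) : MStep R (w ++ [(s, false)]) w

lemma split3 {A : Type*} {w₁ w₂ L x P : List A} {a b : A}
    (h : w₁ ++ a :: b :: w₂ = L ++ x ++ P) :
    (∃ L₂, L = w₁ ++ a :: b :: L₂ ∧ w₂ = L₂ ++ x ++ P) ∨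
    (∃ x₂, L = w₁ ++ [a] ∧ x = b :: x₂ ∧ w₂ = x₂ ++ P) ∨
    (∃ x₁ x₂, x = x₁ ++ a :: b :: x₂ ∧ w₁ = L ++ x₁ ∧ w₂ = x₂ ++ P) ∨
    (∃ x₁ P₂, x = x₁ ++ [a] ∧ P = b :: P₂ ∧ w₁ = L ++ x₁ ∧ w₂ = P₂) ∨
    (∃ P₂, x = [] ∧ L = w₁ ++ [a] ∧ P = b :: P₂ ∧ w₂ = P₂) ∨
    (∃ P₁ P₂, P = P₁ ++ a :: b :: P₂ ∧ w₁ = L ++ x ++ P₁ ∧ w₂ = P₂) := by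
  rw [List.append_assoc] at h
  rcases List.append_eq_append_iff.mp h with ⟨t, hL, ht⟩ | ⟨t, hw₁, ht⟩
  · -- L = w₁ ++ t, a :: b :: w₂ = t ++ (x ++ P)
    match t, ht with
    | [], ht =>
      simp only [List.nil_append] at ht hL
      rcases List.append_eq_cons_iff.mp ht.symm with ⟨hx, hP⟩ | ⟨x', hx, hx'⟩
      · exact Or.inr (Or.inr (Or.inr (Or.inr (Or.inr
          ⟨[], w₂, by simp [hP], by simp [hL, hx], rfl⟩))))
      · rcases List.append_eq_cons_iff.mp hx'.symm with ⟨hx2, hP⟩ | ⟨x'', hx2, hx''⟩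
        · exact Or.inr (Or.inr (Or.inr (Or.inl
            ⟨[], w₂, by simp [hx, hx2], hP, by simp [hL], rfl⟩)))
        · exact Or.inr (Or.inr (Or.inl
            ⟨[], x'', by simp [hx, hx2], by simp [hL], hx''⟩))
    | [c], ht =>
      simp only [List.cons_append, List.nil_append, List.cons.injEq] at ht
      obtain ⟨hca, ht⟩ := ht
      rcases List.append_eq_cons_iff.mp ht.symm with ⟨hx, hP⟩ | ⟨x', hx, hx'⟩
      · exact Or.inr (Or.inr (Or.inr (Or.inr (Or.inl
          ⟨w₂, hx, by rw [hL, hca], hP, rfl⟩))))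
      · exact Or.inr (Or.inl ⟨x', by rw [hL, hca], hx, hx'⟩)
    | c :: d :: t', ht =>
      simp only [List.cons_append, List.cons.injEq] at ht
      obtain ⟨hca, hdb, ht⟩ := ht
      exact Or.inl ⟨t', by rw [hL, hca, hdb], by rw [ht, List.append_assoc]⟩
  · -- w₁ = L ++ t, x ++ P = t ++ (a :: b :: w₂)
    rcases List.append_eq_append_iff.mp ht with ⟨r, ht', hP⟩ | ⟨r, hx, hr⟩
    · -- t = x ++ r, P = r ++ a :: b :: w₂
      exact Or.inr (Or.inr (Or.inr (Or.inr (Or.inr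
        ⟨r, w₂, hP, by rw [hw₁, ht', List.append_assoc], rfl⟩))))
    · -- x = t ++ r, a :: b :: w₂ = r ++ P
      match r, hr with
      | [], hr =>
        simp only [List.nil_append] at hr
        exact Or.inr (Or.inr (Or.inr (Or.inr (Or.inr
          ⟨[], w₂, by simp [hr], by simp [hw₁, hx], rfl⟩))))
      | [c], hr =>
        simp only [List.cons_append, List.nil_append, List.cons.injEq] at hr
        obtain ⟨hca, hP⟩ := hr
        exact Or.inr (Or.inr (Or.inr (Or.inl
          ⟨t, w₂, by rw [hx, hca], hP.symm, hw₁, rfl⟩)))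
      | c :: d :: r', hr =>
        simp only [List.cons_append, List.cons.injEq] at hr
        obtain ⟨hca, hdb, hw₂⟩ := hr
        exact Or.inr (Or.inr (Or.inl ⟨t, r', by rw [hx, hca, hdb], hw₁, hw₂⟩))

lemma extract {R : Set (List S × List S)} {W : List (S × Bool)}
    (hW : Rev R W []) :
    ∀ L x P : List (S × Bool), W = L ++ x ++ P →
      Relation.ReflTransGen (MStep R) x [] := by
  induction hW using Relation.ReflTransGen.head_induction_on with
  | refl =>
    intro L x P h
    obtain ⟨-, hx, -⟩ : L = [] ∧ x = [] ∧ P = [] := by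
      simpa [List.append_eq_nil_iff] using h.symm
    rw [hx]
  | head hstep htail ih =>
    intro L x P hEq
    cases hstep with
    | rel w₁ w₂ s s' v' v hR =>
      rcases split3 hEq with ⟨L₂, hL, hw₂⟩ | ⟨x₂, hL, hx, hw₂⟩ |
        ⟨x₁, x₂, hx, hw₁, hw₂⟩ | ⟨x₁, P₂, hx, hP, hw₁, hw₂⟩ |
        ⟨P₂, hx, hL, hP, hw₂⟩ | ⟨P₁, P₂, hP, hw₁, hw₂⟩
      · exact ih (w₁ ++ pos v' ++ neg v ++ L₂) x P (by rw [hw₂]; simp [List.append_assoc])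
      · refine Relation.ReflTransGen.head ?_ (ih (w₁ ++ pos v' ++ neg v) x₂ P
          (by rw [hw₂]; simp [List.append_assoc]))
        rw [hx]; exact MStep.dropHead s' x₂
      · refine Relation.ReflTransGen.head (MStep.rev ?_)
          (ih L (x₁ ++ pos v' ++ neg v ++ x₂) P
            (by rw [hw₁, hw₂]; simp [List.append_assoc]))
        rw [hx]; exact RevStep.rel x₁ x₂ s s' v' v hR
      · refine Relation.ReflTransGen.head ?_ (ih L x₁ (pos v' ++ neg v ++ P₂)
          (by rw [hw₁, hw₂]; simp [List.append_assoc]))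
        rw [hx]; exact MStep.dropLast s x₁
      · rw [hx]
      · exact ih L x (P₁ ++ pos v' ++ neg v ++ P₂)
          (by rw [hw₁, hw₂]; simp [List.append_assoc])
    | triv w₁ w₂ s =>
      rcases split3 hEq with ⟨L₂, hL, hw₂⟩ | ⟨x₂, hL, hx, hw₂⟩ |
        ⟨x₁, x₂, hx, hw₁, hw₂⟩ | ⟨x₁, P₂, hx, hP, hw₁, hw₂⟩ |
        ⟨P₂, hx, hL, hP, hw₂⟩ | ⟨P₁, P₂, hP, hw₁, hw₂⟩
      · exact ih (w₁ ++ L₂) x P (by rw [hw₂]; simp [List.append_assoc])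
      · refine Relation.ReflTransGen.head ?_ (ih w₁ x₂ P
          (by rw [hw₂]; simp [List.append_assoc]))
        rw [hx]; exact MStep.dropHead s x₂
      · refine Relation.ReflTransGen.head (MStep.rev ?_)
          (ih L (x₁ ++ x₂) P (by rw [hw₁, hw₂]; simp [List.append_assoc]))
        rw [hx]; exact RevStep.triv x₁ x₂ s
      · refine Relation.ReflTransGen.head ?_ (ih L x₁ P₂ (by rw [hw₁, hw₂]))
        rw [hx]; exact MStep.dropLast s x₁
      · rw [hx]
      · exact ih L x (P₁ ++ P₂) (by rw [hw₁, hw₂]; simp [List.append_assoc])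

lemma revStep_cons {R : Set (List S × List S)} {w w' : List (S × Bool)}
    (c : S × Bool) (h : RevStep R w w') : RevStep R (c :: w) (c :: w') := by
  cases h with
  | rel w₁ w₂ s s' v' v hR =>
    simpa [List.cons_append] using RevStep.rel (R := R) (c :: w₁) w₂ s s' v' v hR
  | triv w₁ w₂ s =>
    simpa [List.cons_append] using RevStep.triv (R := R) (c :: w₁) w₂ s

lemma rev_cons {R : Set (List S × List S)} {w w' : List (S × Bool)}
    (c : S × Bool) (h : Rev R w w') : Rev R (c :: w) (c :: w') := by
  induction h with
  | refl => exact Relation.ReflTransGen.refl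
  | tail _ hstep ih => exact Relation.ReflTransGen.tail ih (revStep_cons c hstep)

lemma revStep_append_right {R : Set (List S × List S)} {w w' : List (S × Bool)}
    (t : List (S × Bool)) (h : RevStep R w w') : RevStep R (w ++ t) (w' ++ t) := by
  cases h with
  | rel w₁ w₂ s s' v' v hR =>
    simpa [List.append_assoc] using RevStep.rel (R := R) w₁ (w₂ ++ t) s s' v' v hR
  | triv w₁ w₂ s =>
    simpa [List.append_assoc] using RevStep.triv (R := R) w₁ (w₂ ++ t) s

lemma rev_append_right {R : Set (List S × List S)} {w w' : List (S × Bool)}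
    (t : List (S × Bool)) (h : Rev R w w') : Rev R (w ++ t) (w' ++ t) := by
  induction h with
  | refl => exact Relation.ReflTransGen.refl
  | tail _ hstep ih => exact Relation.ReflTransGen.tail ih (revStep_append_right t hstep)

lemma mrev_posneg {R : Set (List S × List S)} {x : List (S × Bool)}
    (h : Relation.ReflTransGen (MStep R) x []) :
    ∃ p q : List S, Rev R x (pos p ++ neg q) := by
  induction h using Relation.ReflTransGen.head_induction_on with
  | refl => exact ⟨[], [], Relation.ReflTransGen.refl⟩
  | head hstep htail ih =>
    obtain ⟨p, q, hr⟩ := ih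
    cases hstep with
    | rev h => exact ⟨p, q, Relation.ReflTransGen.head h hr⟩
    | dropHead s w =>
      refine ⟨s :: p, q, ?_⟩
      have := rev_cons (s, true) hr
      simpa [pos_cons] using this
    | dropLast s w =>
      refine ⟨p, s :: q, ?_⟩
      have := rev_append_right [(s, false)] hr
      simpa [neg_cons, List.append_assoc] using this

/-- **Lemma 4.3.** If the positive presentation `(S; R)` is complete for right-reversing,
then for `g, h` in `⟨S | R⟩⁺` the following are equivalent: (i) `g` and `h` admit a common
right-multiple; (ii) for some words `u, v` representing `g, h`, the reversing of `u⁻¹ v`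
terminates with a positive–negative word; (iii) the same holds for all such words. -/
theorem stmt_3 (R : Set (List S × List S))
    (hpres : ∀ p ∈ R, p.1 ≠ [] ∧ p.2 ≠ [])
    (hcomp : Complete R) (g h : PresMonoid R) :
    ((∃ f : PresMonoid R, g ∣ f ∧ h ∣ f) ↔
        (∃ u v u' v' : List S, cls R u = g ∧ cls R v = h ∧
          Rev R (neg u ++ pos v) (pos v' ++ neg u'))) ∧
    ((∃ f : PresMonoid R, g ∣ f ∧ h ∣ f) ↔
        (∀ u v : List S, cls R u = g → cls R v = h →
          ∃ u' v' : List S, Rev R (neg u ++ pos v) (pos v' ++ neg u'))) := by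
  have i_of_ii : (∃ u v u' v' : List S, cls R u = g ∧ cls R v = h ∧
      Rev R (neg u ++ pos v) (pos v' ++ neg u')) → ∃ f : PresMonoid R, g ∣ f ∧ h ∣ f := by
    rintro ⟨u, v, u', v', hu, hv, hrev⟩
    have hc := common_of_rev hrev
    refine ⟨cls R u * cls R v', ⟨cls R v', by rw [hu]⟩, ⟨cls R u', by rw [hc, hv]⟩⟩
  have iii_of_i : (∃ f : PresMonoid R, g ∣ f ∧ h ∣ f) →
      ∀ u v : List S, cls R u = g → cls R v = h →
        ∃ u' v' : List S, Rev R (neg u ++ pos v) (pos v' ++ neg u') := by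
    rintro ⟨f, ⟨c, hc⟩, ⟨d, hd⟩⟩ u v hu hv
    obtain ⟨a, ha⟩ := exists_cls R c
    obtain ⟨b, hb⟩ := exists_cls R d
    have heq : cls R (u ++ a) = cls R (v ++ b) := by
      rw [cls_append, cls_append, hu, hv, ha, hb, ← hc, ← hd]
    have hrev := hcomp (u ++ a) (v ++ b) ((Con.eq _).mp heq)
    have hrev' : Rev R (neg a ++ (neg u ++ pos v) ++ pos b) [] := by
      rw [neg_append, pos_append] at hrev
      simpa [List.append_assoc] using hrev
    have hm := extract hrev' (neg a) (neg u ++ pos v) (pos b) rfl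
    obtain ⟨p, q, hpq⟩ := mrev_posneg hm
    exact ⟨q, p, hpq⟩
  constructor
  · constructor
    · intro hi
      obtain ⟨u, hu⟩ := exists_cls R g
      obtain ⟨v, hv⟩ := exists_cls R h
      obtain ⟨u', v', hrev⟩ := iii_of_i hi u v hu hv
      exact ⟨u, v, u', v', hu, hv, hrev⟩
    · exact i_of_ii
  · constructor
    · exact iii_of_i
    · intro hall
      obtain ⟨u, hu⟩ := exists_cls R g
      obtain ⟨v, hv⟩ := exists_cls R h
      obtain ⟨u', v', hrev⟩ := hall u v hu hv
      exact i_of_ii ⟨u, v, u', v', hu, hv, hrev⟩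

end Stmt3
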